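/- Let p : (0,∞) → ℝ be three times continuously differentiable and set f(ρ, ρ_l) = (ρ/ρ_l)(ρ − ρ_l)(p(ρ) − p(ρ_l)). Then for all ρ, ρ_l > 0, ρ_l·∂³_ρ f(ρ, ρ_l) = 6·p'(ρ) + 3·(2ρ − ρ_l)·p''(ρ) + ρ·(ρ − ρ_l)·p'''(ρ); in particular, if 2·p'(ρ) + ρ·p''(ρ) ≥ 0 and 6·p'(ρ) + 6·ρ·p''(ρ) + ρ²·p'''(ρ) ≥ 0, then ∂³_ρ f(ρ, ρ_l) ≥ 0 for every ρ_l with 0 < ρ_l ≤ ρ. -/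

import Mathlib

open Filter Topology Set

lemma stmt13_aux (p p' p'' p''' : ℝ → ℝ)
    (hp' : ∀ ρ > (0 : ℝ), HasDerivAt p (p' ρ) ρ)
    (hp'' : ∀ ρ > (0 : ℝ), HasDerivAt p' (p'' ρ) ρ)
    (hp''' : ∀ ρ > (0 : ℝ), HasDerivAt p'' (p''' ρ) ρ)
    (ρl : ℝ) (hρl : 0 < ρl) (ρ : ℝ) (hρ : 0 < ρ) :
    deriv (deriv (deriv (fun x => x / ρl * (x - ρl) * (p x - p ρl)))) ρ =
      (6 * p' ρ + 3 * (2 * ρ - ρl) * p'' ρ + (ρ ^ 2 - ρl * ρ) * p''' ρ) / ρl := by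
  have hρl0 : ρl ≠ 0 := hρl.ne'
  have h1 : ∀ x > (0 : ℝ), HasDerivAt (fun x => x / ρl * (x - ρl) * (p x - p ρl))
      (((2 * x - ρl) * (p x - p ρl) + (x ^ 2 - ρl * x) * p' x) / ρl) x := by
    intro x hx
    have h := (((hasDerivAt_id x).div_const ρl).mul ((hasDerivAt_id x).sub_const ρl)).mul
      ((hp' x hx).sub_const (p ρl))
    refine h.congr_deriv ?_
    try simp only [id_eq, Pi.mul_apply]
    try field_simp
    ring
  have h2 : ∀ x > (0 : ℝ), HasDerivAt (fun x => ((2 * x - ρl) * (p x - p ρl) + (x ^ 2 - ρl * x) * p' x) / ρl)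
      ((2 * (p x - p ρl) + 2 * (2 * x - ρl) * p' x + (x ^ 2 - ρl * x) * p'' x) / ρl) x := by
    intro x hx
    have hq : HasDerivAt (fun y : ℝ => y ^ 2 - ρl * y) (2 * x - ρl) x := by
      have := ((hasDerivAt_pow 2 x).sub ((hasDerivAt_id x).const_mul ρl))
      refine this.congr_deriv ?_
      ring
    have hl : HasDerivAt (fun y : ℝ => 2 * y - ρl) 2 x := by
      have := ((hasDerivAt_id x).const_mul 2).sub_const ρl
      simpa using this
    have h := ((hl.mul ((hp' x hx).sub_const (p ρl))).add (hq.mul (hp'' x hx))).div_const ρl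
    refine h.congr_deriv ?_
    try simp only [id_eq]
    try field_simp
    ring
  have h3 : ∀ x > (0 : ℝ), HasDerivAt (fun x => (2 * (p x - p ρl) + 2 * (2 * x - ρl) * p' x + (x ^ 2 - ρl * x) * p'' x) / ρl)
      ((6 * p' x + 3 * (2 * x - ρl) * p'' x + (x ^ 2 - ρl * x) * p''' x) / ρl) x := by
    intro x hx
    have hq : HasDerivAt (fun y : ℝ => y ^ 2 - ρl * y) (2 * x - ρl) x := by
      have := ((hasDerivAt_pow 2 x).sub ((hasDerivAt_id x).const_mul ρl))
      refine this.congr_deriv ?_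
      ring
    have hl : HasDerivAt (fun y : ℝ => 2 * (2 * y - ρl)) 4 x := by
      have := (((hasDerivAt_id x).const_mul 2).sub_const ρl).const_mul 2
      exact this.congr_deriv (by ring)
    have h := (((((hp' x hx).sub_const (p ρl)).const_mul 2).add
        (hl.mul (hp'' x hx))).add (hq.mul (hp''' x hx))).div_const ρl
    refine h.congr_deriv ?_
    try simp only [id_eq]
    try field_simp
    ring
  have mem : Ioi (0:ℝ) ∈ 𝓝 ρ := isOpen_Ioi.mem_nhds hρ
  have e1 : deriv (fun x => x / ρl * (x - ρl) * (p x - p ρl)) =ᶠ[𝓝 ρ] (fun x => ((2 * x - ρl) * (p x - p ρl) + (x ^ 2 - ρl * x) * p' x) / ρl) :=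
    Filter.eventuallyEq_of_mem mem (fun x hx => (h1 x hx).deriv)
  have e2 : deriv (deriv (fun x => x / ρl * (x - ρl) * (p x - p ρl))) =ᶠ[𝓝 ρ] (fun x => (2 * (p x - p ρl) + 2 * (2 * x - ρl) * p' x + (x ^ 2 - ρl * x) * p'' x) / ρl) := by
    refine Filter.eventuallyEq_of_mem mem (fun x hx => ?_)
    have e1x : deriv (fun x => x / ρl * (x - ρl) * (p x - p ρl)) =ᶠ[𝓝 x] (fun x => ((2 * x - ρl) * (p x - p ρl) + (x ^ 2 - ρl * x) * p' x) / ρl) :=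
      Filter.eventuallyEq_of_mem (isOpen_Ioi.mem_nhds hx) (fun y hy => (h1 y hy).deriv)
    rw [e1x.deriv_eq, (h2 x hx).deriv]
  rw [e2.deriv_eq, (h3 ρ hρ).deriv]

theorem stmt13 (p p' p'' p''' : ℝ → ℝ)
    (hp' : ∀ ρ > (0 : ℝ), HasDerivAt p (p' ρ) ρ)
    (hp'' : ∀ ρ > (0 : ℝ), HasDerivAt p' (p'' ρ) ρ)
    (hp''' : ∀ ρ > (0 : ℝ), HasDerivAt p'' (p''' ρ) ρ)
    (hp'''cont : ContinuousOn p''' (Set.Ioi 0)) :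
    (∀ ρl > (0 : ℝ), ∀ ρ > (0 : ℝ),
      ρl * deriv (deriv (deriv (fun x => x / ρl * (x - ρl) * (p x - p ρl)))) ρ =
        6 * p' ρ + 3 * (2 * ρ - ρl) * p'' ρ + ρ * (ρ - ρl) * p''' ρ) ∧
    ((∀ ρ > (0 : ℝ), 0 ≤ 2 * p' ρ + ρ * p'' ρ) →
      (∀ ρ > (0 : ℝ), 0 ≤ 6 * p' ρ + 6 * ρ * p'' ρ + ρ ^ 2 * p''' ρ) →
      ∀ ρl ρ : ℝ, 0 < ρl → ρl ≤ ρ →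
        0 ≤ deriv (deriv (deriv (fun x => x / ρl * (x - ρl) * (p x - p ρl)))) ρ) := by
  constructor
  · intro ρl hρl ρ hρ
    rw [stmt13_aux p p' p'' p''' hp' hp'' hp''' ρl hρl ρ hρ, mul_comm,
      div_mul_cancel₀ _ hρl.ne']
    ring
  · intro hA hB ρl ρ hρl hle
    have hρ : 0 < ρ := lt_of_lt_of_le hρl hle
    rw [stmt13_aux p p' p'' p''' hp' hp'' hp''' ρl hρl ρ hρ]
    have hAρ := hA ρ hρ
    have hBρ := hB ρ hρ
    apply div_nonneg _ hρl.le
    nlinarith [mul_nonneg (sub_nonneg.mpr hle) hBρ, mul_nonneg hρl.le hAρ, hρ.le]
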